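/- Let G be a connected bipartite graph of order at least 3 whose vertex set is partitioned into stable sets U and W with 1 ≤ |U| = r ≤ |W| = s. If 1 ≤ r ≤ 2, then λ(Ḡ) ≤ λ(G). -/

import Mathlib

open SimpleGraph

/-- `S` is a dominating set of `G`: every vertex outside `S` has a neighbor in `S`. -/
def isDomSet {α : Type*} (G : SimpleGraph α) (S : Set α) : Prop :=
  ∀ v ∉ S, ∃ u ∈ S, G.Adj v u

/-- `S` is a locating-dominating set (LD-set) of `G`. -/
def isLDSet {α : Type*} (G : SimpleGraph α) (S : Set α) : Prop :=
  isDomSet G S ∧ ∀ u ∉ S, ∀ v ∉ S, u ≠ v →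
    G.neighborSet u ∩ S ≠ G.neighborSet v ∩ S

/-- The location-domination number `λ(G)`. -/
noncomputable def ldNum {α : Type*} (G : SimpleGraph α) : ℕ :=
  sInf {n | ∃ S : Set α, isLDSet G S ∧ S.ncard = n}

/-- The global location-domination number `λ_g(G)`. -/
noncomputable def gldNum {α : Type*} (G : SimpleGraph α) : ℕ :=
  sInf {n | ∃ S : Set α, isLDSet G S ∧ isLDSet Gᶜ S ∧ S.ncard = n}

/-- `G` is bipartite with stable sets `U` and `W`. -/
def bipartiteWith {α : Type*} (G : SimpleGraph α) (U W : Set α) : Prop :=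
  U ∪ W = Set.univ ∧ Disjoint U W ∧
    ∀ ⦃u v : α⦄, G.Adj u v → (u ∈ U ∧ v ∈ W) ∨ (u ∈ W ∧ v ∈ U)

lemma compl_nbr_inter {α : Type*} (G : SimpleGraph α) (S : Set α) {u : α} (hu : u ∉ S) :
    Gᶜ.neighborSet u ∩ S = S \ G.neighborSet u := by
  ext x
  simp only [Set.mem_inter_iff, mem_neighborSet, compl_adj, Set.mem_diff]
  constructor
  · rintro ⟨⟨hne, hna⟩, hx⟩; exact ⟨hx, hna⟩
  · rintro ⟨hx, hna⟩; exact ⟨⟨fun h => hu (h ▸ hx), hna⟩, hx⟩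

lemma locating_compl {α : Type*} (G : SimpleGraph α) (S : Set α)
    {u v : α} (hu : u ∉ S) (hv : v ∉ S)
    (h : G.neighborSet u ∩ S ≠ G.neighborSet v ∩ S) :
    Gᶜ.neighborSet u ∩ S ≠ Gᶜ.neighborSet v ∩ S := by
  rw [compl_nbr_inter G S hu, compl_nbr_inter G S hv]
  intro he
  apply h
  have h1 : S \ (S \ G.neighborSet u) = S \ (S \ G.neighborSet v) := by rw [he]
  rw [Set.diff_diff_right_self, Set.diff_diff_right_self] at h1
  rw [Set.inter_comm (G.neighborSet u) S, Set.inter_comm (G.neighborSet v) S]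
  exact h1

lemma ldNum_le {α : Type*} (G : SimpleGraph α) (S : Set α) (h : isLDSet G S) :
    ldNum G ≤ S.ncard :=
  Nat.sInf_le ⟨S, h, rfl⟩

lemma ldNum_attained {α : Type*} [Fintype α] (G : SimpleGraph α) :
    ∃ S : Set α, isLDSet G S ∧ S.ncard = ldNum G := by
  have hne : {n | ∃ S : Set α, isLDSet G S ∧ S.ncard = n}.Nonempty :=
    ⟨(Set.univ : Set α).ncard, Set.univ,
      ⟨fun v hv => absurd (Set.mem_univ v) hv,
       fun u hu => absurd (Set.mem_univ u) hu⟩, rfl⟩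
  exact Nat.sInf_mem hne

/-- Case `v ∈ U`, `S = W`: the set `{v} ∪ (W \ {w0})` is an LD-set of the complement. -/
lemma lemA {α : Type*} (G : SimpleGraph α) (U W : Set α)
    (hbip : bipartiteWith G U W) {v w0 : α}
    (hvU : v ∈ U) (hw0 : w0 ∈ W)
    (hv : ∀ w ∈ W, G.Adj v w)
    (hW2 : ∃ w1 ∈ W, w1 ≠ w0)
    (huniq : ∀ a ∈ U, ∀ b ∈ U, a ≠ v → b ≠ v → a = b) :
    isLDSet Gᶜ (insert v (W \ {w0})) := by
  obtain ⟨hUW, hdisj, hedge⟩ := hbip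
  have hUU : ∀ a ∈ U, ∀ b ∈ U, ¬ G.Adj a b := by
    intro a ha b hb hab
    rcases hedge hab with ⟨_, hbW⟩ | ⟨haW, _⟩
    · exact Set.disjoint_left.mp hdisj hb hbW
    · exact Set.disjoint_left.mp hdisj ha haW
  have hWW : ∀ a ∈ W, ∀ b ∈ W, ¬ G.Adj a b := by
    intro a ha b hb hab
    rcases hedge hab with ⟨haU, _⟩ | ⟨_, hbU⟩
    · exact Set.disjoint_left.mp hdisj haU ha
    · exact Set.disjoint_left.mp hdisj hbU hb
  have hWv : ∀ a ∈ W, a ≠ v := fun a ha he =>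
    Set.disjoint_left.mp hdisj hvU (he ▸ ha)
  -- outside characterization
  have hout : ∀ x, x ∉ insert v (W \ {w0}) → (x ∈ U ∧ x ≠ v) ∨ x = w0 := by
    intro x hx
    have hxuniv : x ∈ U ∪ W := hUW ▸ Set.mem_univ x
    rcases hxuniv with hxU | hxW
    · refine Or.inl ⟨hxU, fun he => hx ?_⟩
      rw [he]; exact Set.mem_insert v _
    · by_cases hxw : x = w0
      · exact Or.inr hxw
      · refine absurd (Set.mem_insert_of_mem v ?_) hx
        exact Set.mem_diff_singleton.mpr ⟨hxW, hxw⟩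
  constructor
  · intro x hx
    rcases hout x hx with ⟨hxU, hxv⟩ | rfl
    · exact ⟨v, Set.mem_insert v _, (compl_adj G x v).mpr ⟨hxv, hUU x hxU v hvU⟩⟩
    · obtain ⟨w1, hw1, hw1ne⟩ := hW2
      refine ⟨w1, Set.mem_insert_of_mem v (Set.mem_diff_singleton.mpr ⟨hw1, hw1ne⟩),
        (compl_adj G x w1).mpr ⟨fun he => hw1ne he.symm, hWW x hw0 w1 hw1⟩⟩
  · intro a ha b hb hab
    have key : ∀ x, x ∈ U → x ≠ v →
        v ∈ Gᶜ.neighborSet x ∩ insert v (W \ {w0}) := by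
      intro x hxU hxv
      exact ⟨(compl_adj G x v).mpr ⟨hxv, hUU x hxU v hvU⟩, Set.mem_insert v _⟩
    have keyw : v ∉ Gᶜ.neighborSet w0 ∩ insert v (W \ {w0}) := by
      rintro ⟨hadj, -⟩
      exact ((compl_adj G w0 v).mp hadj).2 ((hv w0 hw0).symm)
    rcases hout a ha with ⟨haU, hav⟩ | rfl
    · rcases hout b hb with ⟨hbU, hbv⟩ | rfl
      · exact absurd (huniq a haU b hbU hav hbv) hab
      · intro he
        have := key a haU hav
        rw [he] at this
        exact keyw this
    · rcases hout b hb with ⟨hbU, hbv⟩ | rfl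
      · intro he
        have := key b hbU hbv
        rw [← he] at this
        exact keyw this
      · exact absurd rfl hab

/-- Case `v ∈ W`, `S = U = {u1, u2}`: the set `{u1, v}` is an LD-set of the complement. -/
lemma lemB {α : Type*} (G : SimpleGraph α) (U W : Set α)
    (hbip : bipartiteWith G U W) {v u1 u2 : α}
    (hvW : v ∈ W) (hUeq : U = {u1, u2}) (h12 : u1 ≠ u2)
    (hv : ∀ u ∈ U, G.Adj v u)
    (hdiff : ∀ w ∈ W, ∀ w' ∈ W, w ≠ v → w' ≠ v → w ≠ w' →
      ¬ (G.Adj w u1 ↔ G.Adj w' u1)) :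
    isLDSet Gᶜ ({u1, v} : Set α) := by
  obtain ⟨hUW, hdisj, hedge⟩ := hbip
  have hUU : ∀ a ∈ U, ∀ b ∈ U, ¬ G.Adj a b := by
    intro a ha b hb hab
    rcases hedge hab with ⟨_, hbW⟩ | ⟨haW, _⟩
    · exact Set.disjoint_left.mp hdisj hb hbW
    · exact Set.disjoint_left.mp hdisj ha haW
  have hWW : ∀ a ∈ W, ∀ b ∈ W, ¬ G.Adj a b := by
    intro a ha b hb hab
    rcases hedge hab with ⟨haU, _⟩ | ⟨_, hbU⟩
    · exact Set.disjoint_left.mp hdisj haU ha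
    · exact Set.disjoint_left.mp hdisj hbU hb
  have hu1U : u1 ∈ U := hUeq ▸ Set.mem_insert u1 _
  have hu2U : u2 ∈ U := hUeq ▸ Set.mem_insert_of_mem u1 rfl
  have hWv : ∀ a ∈ W, a ≠ u1 := fun a ha he =>
    Set.disjoint_left.mp hdisj (he ▸ hu1U) ha
  have hout : ∀ x, x ∉ ({u1, v} : Set α) → x = u2 ∨ (x ∈ W ∧ x ≠ v) := by
    intro x hx
    have hx1 : x ≠ u1 := fun he => hx (he ▸ Set.mem_insert x _)
    have hxv : x ≠ v := fun he => hx (he ▸ Set.mem_insert_of_mem u1 rfl)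
    have hxuniv : x ∈ U ∪ W := hUW ▸ Set.mem_univ x
    rcases hxuniv with hxU | hxW
    · rw [hUeq] at hxU
      rcases hxU with h | h
      · exact absurd h hx1
      · exact Or.inl h
    · exact Or.inr ⟨hxW, hxv⟩
  constructor
  · intro x hx
    rcases hout x hx with rfl | ⟨hxW, hxv⟩
    · exact ⟨u1, Set.mem_insert u1 _,
        (compl_adj G x u1).mpr ⟨fun he => h12 he.symm, hUU x hu2U u1 hu1U⟩⟩
    · exact ⟨v, Set.mem_insert_of_mem u1 rfl,
        (compl_adj G x v).mpr ⟨hxv, hWW x hxW v hvW⟩⟩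
  · intro a ha b hb hab
    have keyw : ∀ x ∈ W, x ≠ v → v ∈ Gᶜ.neighborSet x ∩ ({u1, v} : Set α) := by
      intro x hxW hxv
      exact ⟨(compl_adj G x v).mpr ⟨hxv, hWW x hxW v hvW⟩, Set.mem_insert_of_mem u1 rfl⟩
    have keyu : v ∉ Gᶜ.neighborSet u2 ∩ ({u1, v} : Set α) := by
      rintro ⟨hadj, -⟩
      exact ((compl_adj G u2 v).mp hadj).2 ((hv u2 hu2U).symm)
    have keyd : ∀ x ∈ W, ∀ y ∈ W, x ≠ v → y ≠ v → x ≠ y →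
        Gᶜ.neighborSet x ∩ ({u1, v} : Set α) ≠ Gᶜ.neighborSet y ∩ ({u1, v} : Set α) := by
      intro x hxW y hyW hxv hyv hxy he
      apply hdiff x hxW y hyW hxv hyv hxy
      constructor
      · intro hax
        by_contra hay
        have : u1 ∈ Gᶜ.neighborSet y ∩ ({u1, v} : Set α) :=
          ⟨(compl_adj G y u1).mpr ⟨hWv y hyW, fun h => hay h⟩, Set.mem_insert u1 _⟩
        rw [← he] at this
        exact ((compl_adj G x u1).mp this.1).2 hax
      · intro hay
        by_contra hax
        have : u1 ∈ Gᶜ.neighborSet x ∩ ({u1, v} : Set α) :=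
          ⟨(compl_adj G x u1).mpr ⟨hWv x hxW, fun h => hax h⟩, Set.mem_insert u1 _⟩
        rw [he] at this
        exact ((compl_adj G y u1).mp this.1).2 hay
    rcases hout a ha with rfl | ⟨haW, hav⟩
    · rcases hout b hb with rfl | ⟨hbW, hbv⟩
      · exact absurd rfl hab
      · intro he; exact keyu (he ▸ keyw b hbW hbv)
    · rcases hout b hb with rfl | ⟨hbW, hbv⟩
      · intro he; exact keyu (he ▸ keyw a haW hav)
      · exact keyd a haW b hbW hav hbv hab

theorem stmt13 {V : Type*} [Fintype V] (G : SimpleGraph V) (U W : Set V) (r s : ℕ)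
    (hconn : G.Connected) (hbip : bipartiteWith G U W)
    (hU : U.ncard = r) (hW : W.ncard = s)
    (hrs : r ≤ s) (hn : 3 ≤ Fintype.card V)
    (hr1 : 1 ≤ r) (hr2 : r ≤ 2) :
    ldNum Gᶜ ≤ ldNum G := by
  obtain ⟨hUW, hdisj, hedge⟩ := hbip
  obtain ⟨S, hS, hScard⟩ := ldNum_attained G
  obtain ⟨hdom, hloc⟩ := hS
  -- cardinality facts
  have hcardV : Fintype.card V = r + s := by
    rw [← hU, ← hW, ← Set.ncard_union_eq hdisj (Set.toFinite U) (Set.toFinite W), hUW,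
      Set.ncard_univ, Nat.card_eq_fintype_card]
  have hs2 : 2 ≤ s := by
    by_contra h
    push_neg at h
    interval_cases s <;> omega
  by_cases h : ∃ v, v ∉ S ∧ ∀ u ∈ S, G.Adj v u
  · -- there is a vertex adjacent to all of S
    obtain ⟨v, hvS, hv⟩ := h
    have hbip' : bipartiteWith G U W := ⟨hUW, hdisj, hedge⟩
    have hvuniv : v ∈ U ∪ W := hUW ▸ Set.mem_univ v
    rcases hvuniv with hvU | hvW
    · -- v ∈ U, hence S ⊆ W and in fact S = W
      have hSW : S ⊆ W := by
        intro u huS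
        rcases hedge (hv u huS) with ⟨_, h2⟩ | ⟨h1, _⟩
        · exact h2
        · exact absurd hvU (Set.disjoint_right.mp hdisj h1)
      have hWS : W ⊆ S := by
        intro w hwW
        by_contra hwS
        obtain ⟨u, huS, hadj⟩ := hdom w hwS
        rcases hedge hadj with ⟨h1, _⟩ | ⟨_, h2⟩
        · exact Set.disjoint_left.mp hdisj h1 hwW
        · exact Set.disjoint_left.mp hdisj h2 (hSW huS)
      have hSeq : S = W := Set.Subset.antisymm hSW hWS
      have hvW' : ∀ w ∈ W, G.Adj v w := fun w hw => hv w (hWS hw)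
      -- choose w0 and w1 in W
      obtain ⟨w0, hw0, w1, hw1, hne⟩ := (Set.one_lt_ncard (Set.toFinite W)).mp (by omega : 1 < W.ncard)
      have huniq : ∀ a ∈ U, ∀ b ∈ U, a ≠ v → b ≠ v → a = b := by
        intro a ha b hb hav hbv
        by_contra hab
        have hsub : ({v, a, b} : Set V) ⊆ U := by
          intro x hx
          rcases hx with rfl | rfl | rfl
          · exact hvU
          · exact ha
          · exact hb
        have h3 : ({v, a, b} : Set V).ncard = 3 := by
          rw [Set.ncard_insert_of_notMem (by simp [Ne.symm hav, Ne.symm hbv])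
            (Set.toFinite _), Set.ncard_pair hab]
        have := Set.ncard_le_ncard hsub (Set.toFinite U)
        omega
      have hld := lemA G U W ⟨hUW, hdisj, hedge⟩ hvU hw0 hvW' ⟨w1, hw1, fun he => hne he.symm⟩ huniq
      have hcard' : (insert v (W \ {w0}) : Set V).ncard = s := by
        rw [Set.ncard_insert_of_notMem
          (fun hx => Set.disjoint_left.mp hdisj hvU hx.1) (Set.toFinite _),
          Set.ncard_diff_singleton_of_mem hw0, hW]
        omega
      have := ldNum_le Gᶜ _ hld
      rw [hcard'] at this
      rw [← hScard, hSeq, hW]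
      exact this
    · -- v ∈ W, hence S ⊆ U and S = U with |U| = 2
      have hSU : S ⊆ U := by
        intro u huS
        rcases hedge (hv u huS) with ⟨h1, _⟩ | ⟨_, h2⟩
        · exact absurd hvW (Set.disjoint_left.mp hdisj h1)
        · exact h2
      have hSle : S.ncard ≤ 2 := by
        have := Set.ncard_le_ncard hSU (Set.toFinite U)
        omega
      -- S cannot have ncard ≤ 1
      have hS2 : S.ncard = 2 := by
        rcases Nat.lt_or_ge S.ncard 2 with hlt | hge
        · exfalso
          -- at least two vertices outside S
          have hSc : (Sᶜ : Set V).ncard ≥ 2 := by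
            have h1 : S.ncard + (Sᶜ : Set V).ncard = Fintype.card V := by
              rw [← Set.ncard_union_eq disjoint_compl_right (Set.toFinite S)
                (Set.toFinite _), Set.union_compl_self, Set.ncard_univ,
                Nat.card_eq_fintype_card]
            omega
          obtain ⟨a, ha, b, hb, hab⟩ :=
            (Set.one_lt_ncard (Set.toFinite (Sᶜ : Set V))).mp (by omega)
          rw [Set.mem_compl_iff] at ha hb
          -- N(a) ∩ S and N(b) ∩ S nonempty subsets of S with |S| ≤ 1, hence both = S
          have key : ∀ x ∉ S, G.neighborSet x ∩ S = S := by
            intro x hx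
            obtain ⟨u, huS, hadj⟩ := hdom x hx
            apply Set.eq_of_subset_of_ncard_le Set.inter_subset_right _ (Set.toFinite S)
            have h1 : 0 < (G.neighborSet x ∩ S).ncard :=
              (Set.ncard_pos (Set.toFinite _)).mpr ⟨u, hadj, huS⟩
            omega
          exact hloc a ha b hb hab (by rw [key a ha, key b hb])
        · omega
      have hSeq : S = U := Set.eq_of_subset_of_ncard_le hSU (by omega) (Set.toFinite U)
      obtain ⟨u1, u2, h12, hUeq⟩ := Set.ncard_eq_two.mp (by rw [← hSeq]; exact hS2 : U.ncard = 2)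
      have hvU' : ∀ u ∈ U, G.Adj v u := fun u hu => hv u (hSeq ▸ hu)
      -- derive hdiff
      have hnotall : ∀ w ∈ W, w ≠ v → ¬ (G.Adj w u1 ∧ G.Adj w u2) := by
        rintro w hwW hwv ⟨h1, h2⟩
        apply hloc w (fun hw => Set.disjoint_left.mp hdisj (hSeq ▸ hSU hw) hwW) v hvS hwv
        have hNw : G.neighborSet w ∩ S = S := by
          apply Set.eq_of_subset_of_ncard_le Set.inter_subset_right _ (Set.toFinite S)
          apply Set.ncard_le_ncard _ (Set.toFinite _)
          intro x hx
          rw [hSeq, hUeq] at hx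
          rcases hx with rfl | rfl
          · exact ⟨h1, by rw [hSeq, hUeq]; exact Set.mem_insert _ _⟩
          · exact ⟨h2, by rw [hSeq, hUeq]; exact Set.mem_insert_of_mem u1 rfl⟩
        have hNv : G.neighborSet v ∩ S = S :=
          Set.eq_of_subset_of_ncard_le Set.inter_subset_right
            (Set.ncard_le_ncard (fun x hx => ⟨hv x hx, hx⟩) (Set.toFinite _))
            (Set.toFinite S)
        rw [hNw, hNv]
      have hdom' : ∀ w ∈ W, w ≠ v → (G.Adj w u1 ∨ G.Adj w u2) := by
        intro w hwW hwv
        have hwS : w ∉ S := fun hw => Set.disjoint_left.mp hdisj (hSeq ▸ hSU hw) hwW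
        obtain ⟨u, huS, hadj⟩ := hdom w hwS
        rw [hSeq, hUeq] at huS
        rcases huS with rfl | rfl
        · exact Or.inl hadj
        · exact Or.inr hadj
      have hdiff : ∀ w ∈ W, ∀ w' ∈ W, w ≠ v → w' ≠ v → w ≠ w' →
          ¬ (G.Adj w u1 ↔ G.Adj w' u1) := by
        intro w hwW w' hwW' hwv hwv' hww' hiff
        have hwS : w ∉ S := fun hw => Set.disjoint_left.mp hdisj (hSeq ▸ hSU hw) hwW
        have hwS' : w' ∉ S := fun hw => Set.disjoint_left.mp hdisj (hSeq ▸ hSU hw) hwW'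
        apply hloc w hwS w' hwS' hww'
        have h2iff : (G.Adj w u2 ↔ G.Adj w' u2) := by
          by_cases hwu1 : G.Adj w u1
          · have hwu1' : G.Adj w' u1 := hiff.mp hwu1
            constructor
            · intro h2; exact absurd ⟨hwu1, h2⟩ (hnotall w hwW hwv)
            · intro h2; exact absurd ⟨hwu1', h2⟩ (hnotall w' hwW' hwv')
          · have hwu1' : ¬ G.Adj w' u1 := fun h => hwu1 (hiff.mpr h)
            constructor
            · intro _
              rcases hdom' w' hwW' hwv' with h | h
              · exact absurd h hwu1'
              · exact h
            · intro _
              rcases hdom' w hwW hwv with h | h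
              · exact absurd h hwu1
              · exact h
        ext x
        simp only [Set.mem_inter_iff, mem_neighborSet]
        constructor
        · rintro ⟨hadj, hxS⟩
          refine ⟨?_, hxS⟩
          rw [hSeq, hUeq] at hxS
          rcases hxS with rfl | rfl
          · exact hiff.mp hadj
          · exact h2iff.mp hadj
        · rintro ⟨hadj, hxS⟩
          refine ⟨?_, hxS⟩
          rw [hSeq, hUeq] at hxS
          rcases hxS with rfl | rfl
          · exact hiff.mpr hadj
          · exact h2iff.mpr hadj
      have hld := lemB G U W ⟨hUW, hdisj, hedge⟩ hvW hUeq h12 hvU' hdiff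
      have hu1v : u1 ≠ v := fun he =>
        Set.disjoint_left.mp hdisj (hUeq ▸ Set.mem_insert u1 _ : u1 ∈ U) (he ▸ hvW)
      have := ldNum_le Gᶜ _ hld
      rw [Set.ncard_pair hu1v] at this
      omega
  · -- no vertex adjacent to all of S: S itself works for the complement
    push_neg at h
    have hld : isLDSet Gᶜ S := by
      constructor
      · intro x hx
        obtain ⟨u, huS, hna⟩ := h x hx
        exact ⟨u, huS, (compl_adj G x u).mpr ⟨fun he => hx (he ▸ huS), hna⟩⟩
      · intro a ha b hb hab
        exact locating_compl G S ha hb (hloc a ha b hb hab)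
    have := ldNum_le Gᶜ S hld
    omega
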